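/- There is an isomorphism of categories between the category of Λ-interleavings Int_Λ(P, D) and the representation category D^{Σ_Λ P} of the shoelace proset. -/

import Mathlib

open CategoryTheory

/-- A translation of a proset `P`, bundled. -/
structure Translation (P : Type) [Preorder P] where
  toFun : P → P
  mono : Monotone toFun
  le_self : ∀ x, x ≤ toFun x

variable {P : Type} [Preorder P]

/-- The shoelace `Σ_Λ P`: two copies of `P`. -/
def Shoe (T : Translation P) : Type := P ⊕ P

/-- The shoelace preorder. -/
instance {T : Translation P} : Preorder (Shoe T) where
  le x y := match x, y with
    | Sum.inl i, Sum.inl j => i ≤ j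
    | Sum.inr i, Sum.inr j => i ≤ j
    | Sum.inl i, Sum.inr j => T.toFun i ≤ j
    | Sum.inr i, Sum.inl j => T.toFun i ≤ j
  le_refl x := by cases x <;> exact le_refl _
  le_trans x y z h1 h2 := by
    rcases x with i | i <;> rcases y with j | j <;> rcases z with k | k
    · exact le_trans h1 h2
    · exact le_trans (T.mono h1) h2
    · exact le_trans (T.le_self i) (le_trans h1 (le_trans (T.le_self j) h2))
    · exact le_trans h1 h2
    · exact le_trans h1 h2
    · exact le_trans (T.le_self i) (le_trans h1 (le_trans (T.le_self j) h2))
    · exact le_trans (T.mono h1) h2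
    · exact le_trans h1 h2

variable {D : Type*} [Category D]

/-- An object of the category of `Λ`-interleavings: a pair of representations
`M, N : P ⥤ D` with a `Λ`-interleaving pair `(φ, ψ)`. -/
structure IntObj (T : Translation P) (D : Type*) [Category D] where
  M : P ⥤ D
  N : P ⥤ D
  φ : ∀ x, M.obj x ⟶ N.obj (T.toFun x)
  ψ : ∀ x, N.obj x ⟶ M.obj (T.toFun x)
  natφ : ∀ x y (h : x ≤ y),
    M.map (homOfLE h) ≫ φ y = φ x ≫ N.map (homOfLE (T.mono h))
  natψ : ∀ x y (h : x ≤ y),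
    N.map (homOfLE h) ≫ ψ y = ψ x ≫ M.map (homOfLE (T.mono h))
  intφψ : ∀ x, φ x ≫ ψ (T.toFun x) =
    M.map (homOfLE ((T.le_self x).trans (T.le_self (T.toFun x))))
  intψφ : ∀ x, ψ x ≫ φ (T.toFun x) =
    N.map (homOfLE ((T.le_self x).trans (T.le_self (T.toFun x))))

/-- A morphism of `Λ`-interleavings: a pair `(g_M, g_N)` of natural transformations
commuting with the interleaving morphisms. -/
@[ext]
structure IntHom {T : Translation P} (A B : IntObj T D) where
  gM : A.M ⟶ B.M
  gN : A.N ⟶ B.N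
  commφ : ∀ x, A.φ x ≫ gN.app (T.toFun x) = gM.app x ≫ B.φ x
  commψ : ∀ x, A.ψ x ≫ gM.app (T.toFun x) = gN.app x ≫ B.ψ x

/-- The category `Int_Λ(P, D)` of `Λ`-interleavings. -/
instance IntCat (T : Translation P) : Category (IntObj T D) where
  Hom A B := IntHom A B
  id A := ⟨𝟙 A.M, 𝟙 A.N, by simp, by simp⟩
  comp f g := ⟨f.gM ≫ g.gM, f.gN ≫ g.gN,
    fun x => by simp [reassoc_of% (f.commφ x), g.commφ x],
    fun x => by simp [reassoc_of% (f.commψ x), g.commψ x]⟩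
  id_comp f := by apply IntHom.ext <;> simp
  comp_id f := by apply IntHom.ext <;> simp
  assoc f g h := by apply IntHom.ext <;> simp

section Aux

variable {T : Translation P}

/-- Two homs with the same endpoints in a preorder category are equal. -/
lemma shoe_hom_eq {Q : Type} [Preorder Q] {a b : Q} (f g : a ⟶ b) : f = g :=
  Subsingleton.elim _ _

lemma map_comp_homOfLE (X : Shoe T ⥤ D) {a b c : Shoe T} (h1 : a ≤ b) (h2 : b ≤ c)
    (h3 : a ≤ c) : X.map (homOfLE h1) ≫ X.map (homOfLE h2) = X.map (homOfLE h3) := by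
  rw [← X.map_comp]
  congr 1

/-- From an interleaving object, a representation of the shoelace. -/
def shoeF (A : IntObj T D) : Shoe T ⥤ D where
  obj s := match s with
    | Sum.inl i => A.M.obj i
    | Sum.inr i => A.N.obj i
  map {s t} h := match s, t, h with
    | Sum.inl _, Sum.inl _, h => A.M.map (homOfLE h.le)
    | Sum.inl i, Sum.inr _, h => A.φ i ≫ A.N.map (homOfLE h.le)
    | Sum.inr i, Sum.inl _, h => A.ψ i ≫ A.M.map (homOfLE h.le)
    | Sum.inr _, Sum.inr _, h => A.N.map (homOfLE h.le)
  map_id s := by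
    rcases s with i | i
    · exact A.M.map_id i
    · exact A.N.map_id i
  map_comp {s t u} f g := by
    rcases s with i | i <;> rcases t with j | j <;> rcases u with k | k
    · rw [← A.M.map_comp]; exact congrArg A.M.map (shoe_hom_eq _ _)
    · show A.φ i ≫ A.N.map _ = A.M.map (homOfLE f.le) ≫ A.φ j ≫ A.N.map (homOfLE g.le)
      rw [reassoc_of% (A.natφ i j f.le), ← A.N.map_comp]
      exact congrArg (A.φ i ≫ A.N.map ·) (shoe_hom_eq _ _)
    · show A.M.map _ = (A.φ i ≫ A.N.map (homOfLE f.le)) ≫ A.ψ j ≫ A.M.map (homOfLE g.le)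
      rw [Category.assoc, reassoc_of% (A.natψ (T.toFun i) j f.le),
        reassoc_of% (A.intφψ i), ← A.M.map_comp, ← A.M.map_comp]
      exact congrArg A.M.map (shoe_hom_eq _ _)
    · show A.φ i ≫ A.N.map _ = (A.φ i ≫ A.N.map (homOfLE f.le)) ≫ A.N.map (homOfLE g.le)
      rw [Category.assoc, ← A.N.map_comp]
      exact congrArg (A.φ i ≫ A.N.map ·) (shoe_hom_eq _ _)
    · show A.ψ i ≫ A.M.map _ = (A.ψ i ≫ A.M.map (homOfLE f.le)) ≫ A.M.map (homOfLE g.le)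
      rw [Category.assoc, ← A.M.map_comp]
      exact congrArg (A.ψ i ≫ A.M.map ·) (shoe_hom_eq _ _)
    · show A.N.map _ = (A.ψ i ≫ A.M.map (homOfLE f.le)) ≫ A.φ j ≫ A.N.map (homOfLE g.le)
      rw [Category.assoc, reassoc_of% (A.natφ (T.toFun i) j f.le),
        reassoc_of% (A.intψφ i), ← A.N.map_comp, ← A.N.map_comp]
      exact congrArg A.N.map (shoe_hom_eq _ _)
    · show A.ψ i ≫ A.M.map _ = A.N.map (homOfLE f.le) ≫ A.ψ j ≫ A.M.map (homOfLE g.le)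
      rw [reassoc_of% (A.natψ i j f.le), ← A.M.map_comp]
      exact congrArg (A.ψ i ≫ A.M.map ·) (shoe_hom_eq _ _)
    · rw [← A.N.map_comp]; exact congrArg A.N.map (shoe_hom_eq _ _)

/-- From a representation of the shoelace, an interleaving object. -/
def ofShoe (X : Shoe T ⥤ D) : IntObj T D where
  M := { obj := fun i => X.obj (Sum.inl i)
         map := fun {i j} h => X.map (homOfLE h.le)
         map_id := fun i => X.map_id (Sum.inl i)
         map_comp := fun f g => by
           erw [← X.map_comp]; exact congrArg X.map (shoe_hom_eq _ _) }
  N := { obj := fun i => X.obj (Sum.inr i)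
         map := fun {i j} h => X.map (homOfLE h.le)
         map_id := fun i => X.map_id (Sum.inr i)
         map_comp := fun f g => by
           erw [← X.map_comp]; exact congrArg X.map (shoe_hom_eq _ _) }
  φ x := X.map (homOfLE (le_refl (T.toFun x)))
  ψ x := X.map (homOfLE (le_refl (T.toFun x)))
  natφ x y h := (map_comp_homOfLE X _ _ (T.mono h)).trans
    (map_comp_homOfLE X _ _ (T.mono h)).symm
  natψ x y h := (map_comp_homOfLE X _ _ (T.mono h)).trans
    (map_comp_homOfLE X _ _ (T.mono h)).symm
  intφψ x := map_comp_homOfLE X _ _ _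
  intψφ x := map_comp_homOfLE X _ _ _

/-- The functor from interleavings to shoelace representations. -/
def FF (T : Translation P) (D : Type*) [Category D] : IntObj T D ⥤ (Shoe T ⥤ D) where
  obj := shoeF
  map {A B} f :=
    { app := fun s => match s with
        | Sum.inl i => f.gM.app i
        | Sum.inr i => f.gN.app i
      naturality := fun s t h => by
        rcases s with i | i <;> rcases t with j | j
        · exact f.gM.naturality _
        · show (A.φ i ≫ A.N.map _) ≫ f.gN.app j = f.gM.app i ≫ B.φ i ≫ B.N.map _
          rw [Category.assoc, f.gN.naturality, ← Category.assoc, f.commφ i, Category.assoc]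
        · show (A.ψ i ≫ A.M.map _) ≫ f.gM.app j = f.gN.app i ≫ B.ψ i ≫ B.M.map _
          rw [Category.assoc, f.gM.naturality, ← Category.assoc, f.commψ i, Category.assoc]
        · exact f.gN.naturality _ }
  map_id A := by
    apply NatTrans.ext; funext s; rcases s with i | i <;> rfl
  map_comp f g := by
    apply NatTrans.ext; funext s; rcases s with i | i <;> rfl

/-- The functor from shoelace representations to interleavings. -/
def GG (T : Translation P) (D : Type*) [Category D] : (Shoe T ⥤ D) ⥤ IntObj T D where
  obj := ofShoe
  map {X Y} η :=
    { gM := { app := fun i => η.app (Sum.inl i)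
              naturality := fun i j h => η.naturality _ }
      gN := { app := fun i => η.app (Sum.inr i)
              naturality := fun i j h => η.naturality _ }
      commφ := fun x => η.naturality _
      commψ := fun x => η.naturality _ }
  map_id X := rfl
  map_comp f g := rfl

theorem IntObj.ext' {A B : IntObj T D} (hM : A.M = B.M) (hN : A.N = B.N)
    (hφ : HEq A.φ B.φ) (hψ : HEq A.ψ B.ψ) : A = B := by
  cases A; cases B
  cases hM; cases hN; cases hφ; cases hψ; rfl

lemma GF_obj (A : IntObj T D) : ofShoe (shoeF A) = A := by
  refine IntObj.ext' rfl rfl (heq_of_eq (funext fun x => ?_)) (heq_of_eq (funext fun x => ?_))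
  · show A.φ x ≫ A.N.map (homOfLE (le_refl (T.toFun x))) = A.φ x
    rw [show homOfLE (le_refl (T.toFun x)) = 𝟙 (T.toFun x) from rfl, A.N.map_id,
      Category.comp_id]
  · show A.ψ x ≫ A.M.map (homOfLE (le_refl (T.toFun x))) = A.ψ x
    rw [show homOfLE (le_refl (T.toFun x)) = 𝟙 (T.toFun x) from rfl, A.M.map_id,
      Category.comp_id]

lemma eqToHom_gM {A B : IntObj T D} (h : A = B) :
    (eqToHom h).gM = eqToHom (by rw [h]) := by subst h; rfl

lemma eqToHom_gN {A B : IntObj T D} (h : A = B) :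
    (eqToHom h).gN = eqToHom (by rw [h]) := by subst h; rfl

end Aux

/-- The category of `Λ`-interleavings `Int_Λ(P, D)` is isomorphic
to the representation category `D^{Σ_Λ P}` of the shoelace proset: there are
functors composing to the identities in both orders. -/
theorem int_iso_shoelace_rep (T : Translation P) :
    ∃ (F : IntObj T D ⥤ (Shoe T ⥤ D)) (G : (Shoe T ⥤ D) ⥤ IntObj T D),
      F ⋙ G = 𝟭 (IntObj T D) ∧ G ⋙ F = 𝟭 (Shoe T ⥤ D) := by
  refine ⟨FF T D, GG T D, ?_, ?_⟩
  · refine CategoryTheory.Functor.ext GF_obj (fun A B f => ?_)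
    refine IntHom.ext ?_ ?_
    · show ((GG T D).map ((FF T D).map f)).gM =
        (eqToHom (GF_obj A)).gM ≫ f.gM ≫ (eqToHom (GF_obj B).symm).gM
      rw [eqToHom_gM, eqToHom_gM]
      show _ = 𝟙 A.M ≫ f.gM ≫ 𝟙 B.M
      rw [Category.id_comp, Category.comp_id]
      rfl
    · show ((GG T D).map ((FF T D).map f)).gN =
        (eqToHom (GF_obj A)).gN ≫ f.gN ≫ (eqToHom (GF_obj B).symm).gN
      rw [eqToHom_gN, eqToHom_gN]
      show _ = 𝟙 A.N ≫ f.gN ≫ 𝟙 B.N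
      rw [Category.id_comp, Category.comp_id]
      rfl
  · have hobj : ∀ X : Shoe T ⥤ D, shoeF (ofShoe X) = X := by
      intro X
      refine CategoryTheory.Functor.ext (fun s => ?_) (fun s t h => ?_)
      · rcases s with i | i <;> rfl
      · rcases s with i | i <;> rcases t with j | j
        · show X.map (homOfLE h.le) = eqToHom _ ≫ X.map h ≫ eqToHom _
          show X.map (homOfLE h.le) = 𝟙 _ ≫ X.map h ≫ 𝟙 _
          rw [Category.id_comp, Category.comp_id]
          congr 1
        · show X.map _ ≫ X.map _ = eqToHom _ ≫ X.map h ≫ eqToHom _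
          show X.map _ ≫ X.map _ = 𝟙 _ ≫ X.map h ≫ 𝟙 _
          erw [Category.id_comp, Category.comp_id, ← X.map_comp]
          congr 1
        · show X.map _ ≫ X.map _ = eqToHom _ ≫ X.map h ≫ eqToHom _
          show X.map _ ≫ X.map _ = 𝟙 _ ≫ X.map h ≫ 𝟙 _
          erw [Category.id_comp, Category.comp_id, ← X.map_comp]
          congr 1
        · show X.map (homOfLE h.le) = eqToHom _ ≫ X.map h ≫ eqToHom _
          show X.map (homOfLE h.le) = 𝟙 _ ≫ X.map h ≫ 𝟙 _
          rw [Category.id_comp, Category.comp_id]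
          congr 1
    refine CategoryTheory.Functor.ext hobj (fun X Y η => ?_)
    apply NatTrans.ext; funext s
    rcases s with i | i
    · show η.app (Sum.inl i) = (eqToHom (hobj X) ≫ η ≫ eqToHom (hobj Y).symm).app (Sum.inl i)
      erw [NatTrans.comp_app, NatTrans.comp_app, eqToHom_app, eqToHom_app]
      show _ = 𝟙 _ ≫ _ ≫ 𝟙 _
      rw [Category.id_comp, Category.comp_id]
    · show η.app (Sum.inr i) = (eqToHom (hobj X) ≫ η ≫ eqToHom (hobj Y).symm).app (Sum.inr i)
      erw [NatTrans.comp_app, NatTrans.comp_app, eqToHom_app, eqToHom_app]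
      show _ = 𝟙 _ ≫ _ ≫ 𝟙 _
      rw [Category.id_comp, Category.comp_id]
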